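/- arXiv:2105.14695 — 7 statements merged into one kernel-verified Lean document; each statement's English description precedes it below -/
import Mathlib

section
/- Let b_1, ..., b_n be linearly independent vectors in R^n, let L = { Σ_{i=1}^n v_i b_i : v_i ∈ Z } be the lattice they generate, and let b_1*, ..., b_n* be their Gram–Schmidt orthogonalization. Then for every real r ≥ 0, the set of lattice points x ∈ L with ‖x‖ ≤ r is finite and its cardinality is at most ∏_{i=1}^n (2r/‖b_i*‖ + 1). -/
open RealInnerProductSpace
open InnerProductSpace

private lemma toNat_cast_le' (z : ℤ) (x : ℝ) (h1 : (z:ℝ) ≤ x) (h0 : (0:ℝ) ≤ x) :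
    (z.toNat : ℝ) ≤ x := by
  rcases le_total z 0 with h | h
  · rw [Int.toNat_of_nonpos h]; simpa using h0
  · have e := Int.toNat_of_nonneg h
    have : (((z.toNat : ℤ)) : ℝ) ≤ x := by rw [e]; exact h1
    exact_mod_cast this

private lemma ncard_biUnion_le' {α β : Type*} (t : Finset β) (f : β → Set α) :
    (⋃ b ∈ t, f b).ncard ≤ ∑ b ∈ t, (f b).ncard := by
  classical
  induction t using Finset.induction with
  | empty => simp
  | insert _ _ h ih =>
      rw [Finset.set_biUnion_insert, Finset.sum_insert h]
      exact le_trans (Set.ncard_union_le _ _) (by omega)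

private lemma count_lemma : ∀ (n : ℕ) (S : Set (Fin n → ℤ)) (g : Fin n → (Fin n → ℤ) → ℝ)
    (R : Fin n → ℝ), (∀ i, 0 ≤ R i) →
    (∀ i (v w : Fin n → ℤ), (∀ j, i < j → v j = w j) → g i v = g i w) →
    (∀ v ∈ S, ∀ i, |(v i : ℝ) + g i v| ≤ R i) →
    S.Finite ∧ ((S.ncard : ℝ) ≤ ∏ i, (2 * R i + 1)) := by
  intro n
  induction n with
  | zero =>
      intro S g R hR hg hS
      refine ⟨Set.toFinite S, ?_⟩
      have h1 : S.ncard ≤ (Set.univ : Set (Fin 0 → ℤ)).ncard :=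
        Set.ncard_le_ncard (Set.subset_univ S) (Set.toFinite _)
      have h2 : (Set.univ : Set (Fin 0 → ℤ)).ncard = 1 := by
        simp [Set.ncard_univ, Nat.card_unique]
      simp only [Finset.univ_eq_empty, Finset.prod_empty]
      exact_mod_cast h1.trans_eq h2
  | succ n ih =>
      intro S g R hR hg hS
      classical
      set c : ℝ := g (Fin.last n) (fun _ => 0) with hc
      set Rl : ℝ := R (Fin.last n) with hRl
      set T : Finset ℤ := Finset.Icc ⌈-c - Rl⌉ ⌊Rl - c⌋ with hT
      have hRl0 : (0:ℝ) ≤ Rl := hR (Fin.last n)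
      have hlast : ∀ v ∈ S, v (Fin.last n) ∈ T := by
        intro v hv
        have hgc : g (Fin.last n) v = c := by
          apply hg
          intro j hj
          exact absurd hj (not_lt.mpr (Fin.le_last j))
        have h := hS v hv (Fin.last n)
        rw [hgc, abs_le] at h
        rw [hT, Finset.mem_Icc]
        refine ⟨by rw [Int.ceil_le]; linarith [h.1], by rw [Int.le_floor]; linarith [h.2]⟩
      have hTcard : (T.card : ℝ) ≤ 2 * Rl + 1 := by
        rw [hT, Int.card_Icc]
        apply toNat_cast_le'
        · push_cast
          have h1 := Int.floor_le (Rl - c)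
          have h2 := Int.le_ceil (-c - Rl)
          linarith
        · linarith
      set Sk : ℤ → Set (Fin n → ℤ) := fun k => {w | (Fin.snoc w k : Fin (n+1) → ℤ) ∈ S} with hSk
      have hslice : ∀ k : ℤ, (Sk k).Finite ∧
          (((Sk k).ncard : ℝ) ≤ ∏ i : Fin n, (2 * R i.castSucc + 1)) := by
        intro k
        apply ih (Sk k) (fun i w => g i.castSucc (Fin.snoc w k)) (fun i => R i.castSucc)
          (fun i => hR _)
        · intro i v w hvw
          apply hg
          intro j hj
          refine Fin.lastCases ?_ ?_ j hj
          · intro _; simp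
          · intro j' hj'
            have : i < j' := by
              rwa [Fin.castSucc_lt_castSucc_iff] at hj'
            simp [Fin.snoc_castSucc, hvw j' this]
        · intro w hw i
          have := hS _ hw i.castSucc
          simpa [Fin.snoc_castSucc] using this
      have hsub : S ⊆ ⋃ k ∈ T, (fun w : Fin n → ℤ => (Fin.snoc w k : Fin (n+1) → ℤ)) '' Sk k := by
        intro v hv
        refine Set.mem_biUnion (hlast v hv) ?_
        refine ⟨Fin.init v, ?_, ?_⟩
        · simp only [hSk, Set.mem_setOf_eq, Fin.snoc_init_self]; exact hv
        · exact Fin.snoc_init_self v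
      have hUfin : (⋃ k ∈ T, (fun w : Fin n → ℤ => (Fin.snoc w k : Fin (n+1) → ℤ)) '' Sk k).Finite :=
        Set.Finite.biUnion T.finite_toSet (fun k _ => ((hslice k).1.image _))
      refine ⟨hUfin.subset hsub, ?_⟩
      set P : ℝ := ∏ i : Fin n, (2 * R i.castSucc + 1) with hP
      have hP0 : 0 ≤ P := Finset.prod_nonneg (fun i _ => by have := hR i.castSucc; linarith)
      have step1 : (S.ncard : ℝ) ≤
          ((⋃ k ∈ T, (fun w : Fin n → ℤ => (Fin.snoc w k : Fin (n+1) → ℤ)) '' Sk k).ncard : ℝ) := by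
        exact_mod_cast Set.ncard_le_ncard hsub hUfin
      have step2 : ((⋃ k ∈ T, (fun w : Fin n → ℤ => (Fin.snoc w k : Fin (n+1) → ℤ)) '' Sk k).ncard : ℝ)
          ≤ ∑ k ∈ T, (((fun w : Fin n → ℤ => (Fin.snoc w k : Fin (n+1) → ℤ)) '' Sk k).ncard : ℝ) := by
        exact_mod_cast ncard_biUnion_le' T _
      have step3 : ∑ k ∈ T, (((fun w : Fin n → ℤ => (Fin.snoc w k : Fin (n+1) → ℤ)) '' Sk k).ncard : ℝ)
          ≤ ∑ k ∈ T, P := by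
        apply Finset.sum_le_sum
        intro k _
        have hinj : Function.Injective (fun w : Fin n → ℤ => (Fin.snoc w k : Fin (n+1) → ℤ)) := by
          intro w w' h
          funext i
          have := congrFun h i.castSucc
          simpa using this
        rw [Set.ncard_image_of_injective _ hinj]
        exact (hslice k).2
      have step4 : ∑ k ∈ T, P = T.card * P := by
        rw [Finset.sum_const, nsmul_eq_mul]
      have step5 : (T.card : ℝ) * P ≤ (2 * Rl + 1) * P := mul_le_mul_of_nonneg_right hTcard hP0
      have hprod : ∏ i : Fin (n+1), (2 * R i + 1) = P * (2 * Rl + 1) :=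
        Fin.prod_univ_castSucc fun i => 2 * R i + 1
      rw [hprod]
      calc (S.ncard : ℝ) ≤ _ := step1
        _ ≤ _ := step2
        _ ≤ _ := step3
        _ = _ := step4
        _ ≤ (2 * Rl + 1) * P := step5
        _ = P * (2 * Rl + 1) := mul_comm _ _

/-- Helper instance (provable; works around an instance-resolution hiccup). -/
instance (n : ℕ) : WellFoundedLT (Fin n) := inferInstance

/-- Let `b 1, ..., b n` be linearly independent vectors in `ℝ^n`, let
`L = { ∑ v i • b i : v ∈ ℤ^n }` be the lattice they generate, and let `gramSchmidt ℝ b`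
be their Gram–Schmidt orthogonalization. Then for every real `r ≥ 0`, the set of lattice
points `x ∈ L` with `‖x‖ ≤ r` is finite and its cardinality is at most
`∏ i, (2 r / ‖bᵢ*‖ + 1)`. -/
theorem stmt_0 (n : ℕ) (b : Fin n → EuclideanSpace ℝ (Fin n))
    (hb : LinearIndependent ℝ b)
    (L : Set (EuclideanSpace ℝ (Fin n)))
    (hL : L = {x | ∃ v : Fin n → ℤ, x = ∑ i, (v i : ℝ) • b i})
    (r : ℝ) (hr : 0 ≤ r) :
    {x ∈ L | ‖x‖ ≤ r}.Finite ∧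
      (Nat.card {x ∈ L | ‖x‖ ≤ r} : ℝ) ≤
        ∏ i : Fin n, (2 * r / ‖InnerProductSpace.gramSchmidt ℝ b i‖ + 1) := by
  classical
  set B : Fin n → EuclideanSpace ℝ (Fin n) := gramSchmidt ℝ b with hB
  have hBne : ∀ i, B i ≠ 0 := fun i => gramSchmidt_ne_zero i hb
  have hBpos : ∀ i, 0 < ‖B i‖ := fun i => norm_pos_iff.mpr (hBne i)
  have hself : ∀ i, ⟪B i, b i⟫ = ‖B i‖ ^ 2 := by
    intro i
    conv_lhs => rw [gramSchmidt_def'' ℝ b i]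
    rw [inner_add_right, real_inner_self_eq_norm_sq, inner_sum]
    rw [Finset.sum_eq_zero, add_zero]
    intro j hj
    rw [inner_smul_right]
    have : ⟪gramSchmidt ℝ b i, gramSchmidt ℝ b j⟫ = 0 :=
      gramSchmidt_orthogonal ℝ b (Finset.mem_Iio.mp hj).ne'
    simp [hB, this]
  have hlt : ∀ i j : Fin n, j < i → ⟪B i, b j⟫ = 0 := fun i j h =>
    gramSchmidt_inv_triangular ℝ b h
  -- expansion of the inner product with a lattice point
  have hexp : ∀ (v : Fin n → ℤ) (i : Fin n),
      ⟪B i, ∑ j, (v j : ℝ) • b j⟫ = (v i : ℝ) * ‖B i‖ ^ 2 +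
        ∑ j ∈ Finset.univ.filter (fun j => i < j), (v j : ℝ) * ⟪B i, b j⟫ := by
    intro v i
    rw [inner_sum]
    simp_rw [real_inner_smul_right]
    rw [← Finset.add_sum_erase _ _ (Finset.mem_univ i), hself i]
    congr 1
    refine (Finset.sum_subset ?_ ?_).symm
    · intro j hj
      rw [Finset.mem_filter] at hj
      exact Finset.mem_erase.mpr ⟨hj.2.ne', Finset.mem_univ j⟩
    · intro j hj hj'
      have hji : j < i := by
        rcases lt_trichotomy j i with h | h | h
        · exact h
        · exact absurd h (Finset.mem_erase.mp hj).1
        · exact absurd (Finset.mem_filter.mpr ⟨Finset.mem_univ j, h⟩) hj'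
      rw [hlt i j hji, mul_zero]
  set gfun : Fin n → (Fin n → ℤ) → ℝ := fun i v =>
    (∑ j ∈ Finset.univ.filter (fun j => i < j), (v j : ℝ) * ⟪B i, b j⟫) / ‖B i‖ ^ 2 with hgfun
  set V : Set (Fin n → ℤ) := {v | ‖∑ j, (v j : ℝ) • b j‖ ≤ r} with hV
  have hkey : ∀ v ∈ V, ∀ i, |(v i : ℝ) + gfun i v| ≤ r / ‖B i‖ := by
    intro v hv i
    have hx : ‖∑ j, (v j : ℝ) • b j‖ ≤ r := hv
    have h1 : |⟪B i, ∑ j, (v j : ℝ) • b j⟫| ≤ ‖B i‖ * r :=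
      (abs_real_inner_le_norm _ _).trans (mul_le_mul_of_nonneg_left hx (norm_nonneg _))
    have hsq : (0:ℝ) < ‖B i‖ ^ 2 := pow_pos (hBpos i) 2
    have h2 : ⟪B i, ∑ j, (v j : ℝ) • b j⟫ = ((v i : ℝ) + gfun i v) * ‖B i‖ ^ 2 := by
      rw [hexp v i, hgfun]
      field_simp
      rw [mul_comm (‖B i‖ ^ 2), add_mul, div_mul_cancel₀ _ hsq.ne']
    have h3 : |(v i : ℝ) + gfun i v| * ‖B i‖ ^ 2 ≤ ‖B i‖ * r := by
      rw [← abs_of_pos hsq, ← abs_mul, ← h2]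
      exact h1
    rw [le_div_iff₀ (hBpos i)]
    have h4 : (|(v i : ℝ) + gfun i v| * ‖B i‖) * ‖B i‖ ≤ r * ‖B i‖ := by
      calc (|(v i : ℝ) + gfun i v| * ‖B i‖) * ‖B i‖ = |(v i : ℝ) + gfun i v| * ‖B i‖ ^ 2 := by ring
        _ ≤ ‖B i‖ * r := h3
        _ = r * ‖B i‖ := mul_comm _ _
    exact le_of_mul_le_mul_right h4 (hBpos i)
  have hdep : ∀ i (v w : Fin n → ℤ), (∀ j, i < j → v j = w j) → gfun i v = gfun i w := by
    intro i v w hvw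
    simp only [hgfun]
    refine congrArg (· / ‖B i‖ ^ 2) ?_
    exact Finset.sum_congr rfl fun j hj => by rw [hvw j (Finset.mem_filter.mp hj).2]
  obtain ⟨hVfin, hVcard⟩ := count_lemma n V gfun (fun i => r / ‖B i‖)
    (fun i => div_nonneg hr (norm_nonneg _)) hdep hkey
  have himg : {x ∈ L | ‖x‖ ≤ r} = (fun v : Fin n → ℤ => ∑ j, (v j : ℝ) • b j) '' V := by
    ext x
    simp only [hL, Set.mem_setOf_eq, Set.mem_image, hV]
    constructor
    · rintro ⟨⟨v, rfl⟩, hx⟩; exact ⟨v, hx, rfl⟩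
    · rintro ⟨v, hv, rfl⟩; exact ⟨⟨v, rfl⟩, hv⟩
  constructor
  · rw [himg]; exact hVfin.image _
  · rw [himg, Nat.card_coe_set_eq]
    calc (((fun v : Fin n → ℤ => ∑ j, (v j : ℝ) • b j) '' V).ncard : ℝ)
        ≤ (V.ncard : ℝ) := by exact_mod_cast Set.ncard_image_le hVfin
      _ ≤ ∏ i, (2 * (r / ‖B i‖) + 1) := hVcard
      _ = ∏ i : Fin n, (2 * r / ‖gramSchmidt ℝ b i‖ + 1) := by
          refine Finset.prod_congr rfl ?_
          intro i _
          rw [mul_div_assoc, hB]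
end

section
/- Let b_1, ..., b_n be linearly independent vectors in R^n with Gram–Schmidt orthogonalization b_1*, ..., b_n* and Gram–Schmidt coefficients μ_{ij}, and let r ≥ 0. If v ∈ Z^n satisfies ‖Σ_{i=1}^n v_i b_i‖ ≤ r, then for every j = 1, ..., n one has | v_j + Σ_{i=j+1}^n v_i μ_{ij} | ≤ r / ‖b_j*‖. -/
/-- Let `b 1, ..., b n` be linearly independent vectors in `ℝ^n` with
Gram–Schmidt orthogonalization `b* = gramSchmidt ℝ b` and Gram–Schmidt coefficients
`μ i j = ⟪b i, bⱼ*⟫ / ‖bⱼ*‖²`, and let `r ≥ 0`. If `v ∈ ℤ^n` satisfies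
`‖∑ i, v i • b i‖ ≤ r`, then for every `j` one has
`|v j + ∑_{i > j} v i * μ i j| ≤ r / ‖bⱼ*‖`. -/
theorem stmt_3 (n : ℕ) (b : Fin n → EuclideanSpace ℝ (Fin n))
    (hb : LinearIndependent ℝ b) (μ : Fin n → Fin n → ℝ)
    (hμ : ∀ i j : Fin n,
      μ i j = (inner ℝ (b i) (InnerProductSpace.gramSchmidt ℝ b j) : ℝ) / ‖InnerProductSpace.gramSchmidt ℝ b j‖ ^ 2)
    (r : ℝ) (hr : 0 ≤ r) (v : Fin n → ℤ)
    (hv : ‖∑ i : Fin n, (v i : ℝ) • b i‖ ≤ r) :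
    ∀ j : Fin n,
      |(v j : ℝ) + ∑ i ∈ Finset.Ioi j, (v i : ℝ) * μ i j| ≤ r / ‖InnerProductSpace.gramSchmidt ℝ b j‖ := by
  intro j
  set B := InnerProductSpace.gramSchmidt ℝ b with hB
  have hg0 : B j ≠ 0 := InnerProductSpace.gramSchmidt_ne_zero j hb
  have hg : (0:ℝ) < ‖B j‖ := norm_pos_iff.mpr hg0
  -- inner of b i with B j vanishes for i < j
  have hlt : ∀ i : Fin n, i < j → (inner ℝ (b i) (B j) : ℝ) = 0 := by
    intro i hij
    rw [real_inner_comm]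
    exact InnerProductSpace.gramSchmidt_inv_triangular ℝ b hij
  -- inner of b j with B j is ‖B j‖²
  have hjj : (inner ℝ (b j) (B j) : ℝ) = ‖B j‖ ^ 2 := by
    conv_lhs => rw [show b j = B j + ∑ i ∈ Finset.Iio j,
      ((ℝ ∙ B i).starProjection (b j) : EuclideanSpace ℝ (Fin n)) from
        InnerProductSpace.gramSchmidt_def' ℝ b j]
    rw [inner_add_left, real_inner_self_eq_norm_sq, sum_inner]
    rw [Finset.sum_eq_zero, add_zero]
    intro i hi
    rw [Submodule.starProjection_singleton ℝ, real_inner_smul_left,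
      InnerProductSpace.gramSchmidt_orthogonal ℝ b (ne_of_lt (Finset.mem_Iio.mp hi)), mul_zero]
  -- the key identity
  have key : (inner ℝ (∑ i : Fin n, (v i : ℝ) • b i) (B j) : ℝ)
      = ((v j : ℝ) + ∑ i ∈ Finset.Ioi j, (v i : ℝ) * μ i j) * ‖B j‖ ^ 2 := by
    rw [sum_inner]
    have : ∀ i : Fin n, (inner ℝ ((v i : ℝ) • b i) (B j) : ℝ)
        = (v i : ℝ) * inner ℝ (b i) (B j) := fun i => real_inner_smul_left _ _ _
    simp_rw [this]
    rw [← Finset.sum_subset (Finset.subset_univ (Finset.Ici j))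
      (by intro i _ hi; rw [hlt i (by simpa using hi), mul_zero])]
    rw [Finset.Ici_eq_cons_Ioi, Finset.sum_cons, hjj, add_mul, Finset.sum_mul]
    congr 1
    refine Finset.sum_congr rfl fun i hi => ?_
    rw [hμ i j]
    field_simp
  have habs : |(inner ℝ (∑ i : Fin n, (v i : ℝ) • b i) (B j) : ℝ)| ≤ r * ‖B j‖ :=
    le_trans (abs_real_inner_le_norm _ _) (by
      exact mul_le_mul_of_nonneg_right hv (norm_nonneg _))
  rw [key, abs_mul, abs_of_nonneg (by positivity : (0:ℝ) ≤ ‖B j‖ ^ 2)] at habs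
  rw [le_div_iff₀ hg]
  rw [pow_two, ← mul_assoc] at habs
  exact le_of_mul_le_mul_right habs hg
end

section
/- Let n ≥ 1, let real numbers μ_{ij} be given for 1 ≤ j < i ≤ n, and let c_1, ..., c_n be nonnegative reals. Then the set of integer vectors v ∈ Z^n satisfying | v_j + Σ_{i=j+1}^n v_i μ_{ij} | ≤ c_j for all j = 1, ..., n is finite and has cardinality at most ∏_{j=1}^n (2 c_j + 1). -/
set_option maxHeartbeats 1000000 in
private theorem stmt_4_aux (n : ℕ) (μ : Fin n → Fin n → ℝ) (c : Fin n → ℝ)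
    (hc : ∀ j, 0 ≤ c j) :
    {v : Fin n → ℤ |
        ∀ j : Fin n, |(v j : ℝ) + ∑ i ∈ Finset.Ioi j, (v i : ℝ) * μ i j| ≤ c j}.Finite ∧
      (({v : Fin n → ℤ |
          ∀ j : Fin n, |(v j : ℝ) + ∑ i ∈ Finset.Ioi j, (v i : ℝ) * μ i j| ≤ c j}.ncard) : ℝ) ≤
        ∏ j : Fin n, (2 * c j + 1) := by
  induction n with
  | zero =>
    have h : {v : Fin 0 → ℤ |
        ∀ j : Fin 0, |(v j : ℝ) + ∑ i ∈ Finset.Ioi j, (v i : ℝ) * μ i j| ≤ c j} = Set.univ :=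
      Set.eq_univ_of_forall (fun v j => j.elim0)
    rw [h]
    refine ⟨Set.finite_univ, ?_⟩
    simp [Set.ncard_univ]
  | succ n IH =>
    -- tail data
    set μ' : Fin n → Fin n → ℝ := fun i j => μ i.succ j.succ with hμ'
    set c' : Fin n → ℝ := fun j => c j.succ with hc'def
    have hc' : ∀ j, 0 ≤ c' j := fun j => hc j.succ
    obtain ⟨hS'fin, hS'card⟩ := IH μ' c' hc'
    set S' : Set (Fin n → ℤ) :=
      {v : Fin n → ℤ |
        ∀ j : Fin n, |(v j : ℝ) + ∑ i ∈ Finset.Ioi j, (v i : ℝ) * μ' i j| ≤ c' j} with hS'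
    set γ : (Fin n → ℤ) → ℝ := fun w => ∑ i : Fin n, (w i : ℝ) * μ i.succ 0 with hγ
    set A : (Fin n → ℤ) → ℤ := fun w => ⌈-c 0 - γ w⌉ with hA
    set B : (Fin n → ℤ) → ℤ := fun w => ⌊c 0 - γ w⌋ with hB
    set F' : Finset (Fin n → ℤ) := hS'fin.toFinset with hF'
    set F : Finset (Fin (n + 1) → ℤ) :=
      F'.biUnion (fun w => (Finset.Icc (A w) (B w)).image (fun t => Fin.cons t w)) with hF
    -- membership characterization
    have hmem : ∀ v : Fin (n + 1) → ℤ,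
        (∀ j : Fin (n + 1), |(v j : ℝ) + ∑ i ∈ Finset.Ioi j, (v i : ℝ) * μ i j| ≤ c j) ↔
          (|(v 0 : ℝ) + γ (fun i => v i.succ)| ≤ c 0 ∧ (fun i => v i.succ) ∈ S') := by
      intro v
      rw [Fin.forall_fin_succ]
      constructor
      · rintro ⟨h0, hs⟩
        refine ⟨?_, ?_⟩
        · rw [hγ]; simpa [Fin.sum_Ioi_zero] using h0
        · intro j
          have := hs j
          rw [Fin.sum_Ioi_succ] at this
          simpa [μ', c'] using this
      · rintro ⟨h0, hs⟩
        constructor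
        · rw [hγ] at h0; simpa [Fin.sum_Ioi_zero] using h0
        · intro j
          have := hs j
          rw [Fin.sum_Ioi_succ]
          simpa [μ', c'] using this
    -- set equals the finset
    have hset : {v : Fin (n + 1) → ℤ |
        ∀ j : Fin (n + 1), |(v j : ℝ) + ∑ i ∈ Finset.Ioi j, (v i : ℝ) * μ i j| ≤ c j} = ↑F := by
      ext v
      simp only [Set.mem_setOf_eq, hmem, hF, Finset.coe_biUnion, Finset.mem_coe,
        Finset.mem_biUnion, Finset.mem_image, Finset.mem_Icc, hF',
        Set.Finite.mem_toFinset, Set.mem_iUnion]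
      constructor
      · rintro ⟨h0, hs⟩
        refine ⟨fun i => v i.succ, hs, v 0, ?_, ?_⟩
        · rw [abs_le] at h0
          constructor
          · rw [hA, Int.ceil_le]; push_cast; linarith [h0.1]
          · rw [hB, Int.le_floor]; push_cast; linarith [h0.2]
        · exact (Fin.cons_self_tail v)
      · rintro ⟨w, hw, t, ht, rfl⟩
        have h1 : (A w : ℝ) ≤ (t : ℝ) := by exact_mod_cast ht.1
        have h2 : (t : ℝ) ≤ (B w : ℝ) := by exact_mod_cast ht.2
        have hAle : -c 0 - γ w ≤ (A w : ℝ) := Int.le_ceil _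
        have hBle : (B w : ℝ) ≤ c 0 - γ w := Int.floor_le _
        have htail : (fun i : Fin n => (Fin.cons t w : Fin (n+1) → ℤ) i.succ) = w := by
          funext i; simp
        refine ⟨?_, by rw [htail]; exact hw⟩
        rw [htail]
        simp only [Fin.cons_zero]
        rw [abs_le]
        constructor <;> linarith
    rw [hset]
    refine ⟨F.finite_toSet, ?_⟩
    rw [Set.ncard_coe_finset]
    -- cardinality bound
    have hcard0 : F.card ≤ ∑ w ∈ F',
        ((Finset.Icc (A w) (B w)).image (fun t => (Fin.cons t w : Fin (n+1) → ℤ))).card :=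
      Finset.card_biUnion_le
    have hcard1 : (F.card : ℝ) ≤ ∑ w ∈ F', (2 * c 0 + 1) := by
      calc (F.card : ℝ) ≤ ∑ w ∈ F',
            ((((Finset.Icc (A w) (B w)).image (fun t => (Fin.cons t w : Fin (n+1) → ℤ))).card : ℕ) : ℝ) := by
            exact_mod_cast hcard0
        _ ≤ ∑ w ∈ F', (2 * c 0 + 1) := by
            apply Finset.sum_le_sum
            intro w _
            have h1 : ((Finset.Icc (A w) (B w)).image (fun t => (Fin.cons t w : Fin (n+1) → ℤ))).card
                ≤ (Finset.Icc (A w) (B w)).card := Finset.card_image_le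
            have h2 : ((Finset.Icc (A w) (B w)).card : ℝ) ≤ 2 * c 0 + 1 := by
              rw [Int.card_Icc]
              have hAle : -c 0 - γ w ≤ (A w : ℝ) := Int.le_ceil _
              have hBle : (B w : ℝ) ≤ c 0 - γ w := Int.floor_le _
              rcases le_or_gt (B w + 1 - A w) 0 with h | h
              · rw [Int.toNat_of_nonpos h]
                norm_num
                linarith [hc 0]
              · have h' : (((B w + 1 - A w).toNat : ℤ) : ℝ) = (B w : ℝ) + 1 - (A w : ℝ) := by
                  rw [Int.toNat_of_nonneg h.le]; push_cast; ring
                have h'' : (((B w + 1 - A w).toNat : ℕ) : ℝ)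
                    = (((B w + 1 - A w).toNat : ℤ) : ℝ) := by push_cast; ring
                rw [h'', h']
                linarith
            calc (((Finset.Icc (A w) (B w)).image (fun t => (Fin.cons t w : Fin (n+1) → ℤ))).card : ℝ)
                ≤ ((Finset.Icc (A w) (B w)).card : ℝ) := by exact_mod_cast h1
              _ ≤ 2 * c 0 + 1 := h2
    have hF'card : (F'.card : ℝ) = (S'.ncard : ℝ) := by
      rw [hF', Set.ncard_eq_toFinset_card S' hS'fin]
    have hprodnn : (0 : ℝ) ≤ ∏ j : Fin n, (2 * c' j + 1) := by
      apply Finset.prod_nonneg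
      intro j _
      linarith [hc' j]
    calc (F.card : ℝ) ≤ ∑ w ∈ F', (2 * c 0 + 1) := hcard1
      _ = (F'.card : ℝ) * (2 * c 0 + 1) := by rw [Finset.sum_const]; push_cast; ring
      _ ≤ (∏ j : Fin n, (2 * c' j + 1)) * (2 * c 0 + 1) := by
          apply mul_le_mul_of_nonneg_right _ (by linarith [hc 0])
          rw [hF'card]; exact hS'card
      _ = ∏ j : Fin (n + 1), (2 * c j + 1) := by
          rw [Fin.prod_univ_succ]; ring

/-- Let `n ≥ 1`, let real numbers `μ i j` be given for `j < i`, and let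
`c 1, ..., c n` be nonnegative reals. Then the set of integer vectors `v ∈ ℤ^n` satisfying
`|v j + ∑_{i > j} v i * μ i j| ≤ c j` for all `j` is finite and has cardinality at most
`∏ j, (2 * c j + 1)`. -/
theorem stmt_4 (n : ℕ) (hn : 1 ≤ n) (μ : Fin n → Fin n → ℝ) (c : Fin n → ℝ)
    (hc : ∀ j, 0 ≤ c j) :
    {v : Fin n → ℤ |
        ∀ j : Fin n, |(v j : ℝ) + ∑ i ∈ Finset.Ioi j, (v i : ℝ) * μ i j| ≤ c j}.Finite ∧
      (Nat.card {v : Fin n → ℤ |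
          ∀ j : Fin n, |(v j : ℝ) + ∑ i ∈ Finset.Ioi j, (v i : ℝ) * μ i j| ≤ c j} : ℝ) ≤
        ∏ j : Fin n, (2 * c j + 1) := by
  obtain ⟨h1, h2⟩ := stmt_4_aux n μ c hc
  exact ⟨h1, by rwa [Nat.card_coe_set_eq]⟩
end

section
/- Let b_1, ..., b_n be linearly independent vectors in R^n with Gram–Schmidt orthogonalization b_1*, ..., b_n*, coefficients μ_{ij}, and B_i = ‖b_i*‖². Fix 2 ≤ k ≤ n and let c_1, ..., c_n be the basis obtained from b_1, ..., b_n by exchanging b_{k−1} and b_k. Then the (k−1)-th Gram–Schmidt vector of the new basis is c_{k−1}* = b_k* + μ_{k,k−1} b_{k−1}*, and hence ‖c_{k−1}*‖² = B_k + μ_{k,k−1}² B_{k−1}. -/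
open Finset InnerProductSpace

lemma gs_congr {n : ℕ} (f g : Fin n → EuclideanSpace ℝ (Fin n)) :
    ∀ j : Fin n, (∀ i ≤ j, f i = g i) → gramSchmidt ℝ f j = gramSchmidt ℝ g j := by
  intro j
  induction j using WellFoundedLT.induction with
  | ind j ih =>
    intro h
    rw [gramSchmidt_def, gramSchmidt_def, h j le_rfl]
    congr 1
    refine Finset.sum_congr rfl fun i hi => ?_
    rw [ih i (mem_Iio.1 hi) (fun i' hi' => h i' (hi'.trans (mem_Iio.1 hi).le))]

/-- Let `b 1, ..., b n` be linearly independent vectors in `ℝ^n` with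
Gram–Schmidt orthogonalization `b*`, coefficients `μ`, and `B i = ‖bᵢ*‖²`. Let `k' , k`
be consecutive indices (`k' + 1 = k`, the paper's `k−1` and `k`) and let `c` be the basis
obtained from `b` by exchanging `b k'` and `b k`. Then the `k'`-th Gram–Schmidt vector of
the new basis is `c k' * = b k * + μ k k' • b k' *`, and hence
`‖c k' *‖² = B k + μ k k' ² * B k'`. -/
theorem stmt_7 (n : ℕ) (b : Fin n → EuclideanSpace ℝ (Fin n))
    (hb : LinearIndependent ℝ b) (μ : Fin n → Fin n → ℝ)
    (hμ : ∀ i j : Fin n,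
      μ i j = (inner ℝ (b i) (InnerProductSpace.gramSchmidt ℝ b j) : ℝ) / ‖InnerProductSpace.gramSchmidt ℝ b j‖ ^ 2)
    (B : Fin n → ℝ) (hB : ∀ i, B i = ‖InnerProductSpace.gramSchmidt ℝ b i‖ ^ 2)
    (k' k : Fin n) (hk : (k' : ℕ) + 1 = (k : ℕ))
    (c : Fin n → EuclideanSpace ℝ (Fin n)) (hc : c = b ∘ Equiv.swap k' k) :
    InnerProductSpace.gramSchmidt ℝ c k' = InnerProductSpace.gramSchmidt ℝ b k + μ k k' • InnerProductSpace.gramSchmidt ℝ b k' ∧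
      ‖InnerProductSpace.gramSchmidt ℝ c k'‖ ^ 2 = B k + μ k k' ^ 2 * B k' := by
  have hk'k : k' ≠ k := by
    intro h; rw [h] at hk; omega
  have hk'ltk : k' < k := by
    rw [Fin.lt_def]; omega
  -- c agrees with b below k'
  have hcb : ∀ i : Fin n, i < k' → c i = b i := by
    intro i hi
    rw [hc]
    simp only [Function.comp_apply]
    rw [Equiv.swap_apply_of_ne_of_ne (ne_of_lt hi) (ne_of_lt (hi.trans hk'ltk))]
  have hck' : c k' = b k := by
    rw [hc]; simp
  -- gramSchmidt agrees below k'
  have hgs : ∀ i : Fin n, i < k' → gramSchmidt ℝ c i = gramSchmidt ℝ b i := by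
    intro i hi
    exact gs_congr c b i (fun i' hi' => hcb i' (lt_of_le_of_lt hi' hi))
  have hIio : Finset.Iio k = insert k' (Finset.Iio k') := by
    rw [Finset.Iio_insert]
    ext i
    simp only [Finset.mem_Iio, Finset.mem_Iic, Fin.lt_def, Fin.le_def]
    omega
  -- key computation
  have hb' := gramSchmidt_def' ℝ b k
  rw [hIio, Finset.sum_insert (by simp)] at hb'
  have hmain : gramSchmidt ℝ c k' = gramSchmidt ℝ b k + μ k k' • gramSchmidt ℝ b k' := by
    rw [gramSchmidt_def, hck']
    have hsum : ∑ i ∈ Finset.Iio k',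
        ((ℝ ∙ gramSchmidt ℝ c i).starProjection (b k) : EuclideanSpace ℝ (Fin n))
        = ∑ i ∈ Finset.Iio k',
        ((ℝ ∙ gramSchmidt ℝ b i).starProjection (b k) : EuclideanSpace ℝ (Fin n)) :=
      Finset.sum_congr rfl fun i hi => by rw [hgs i (Finset.mem_Iio.1 hi)]
    rw [hsum]
    nth_rewrite 1 [hb']
    rw [Submodule.starProjection_singleton]
    rw [hμ k k', real_inner_comm]
    abel
  refine ⟨hmain, ?_⟩
  rw [hmain, hB, hB]
  rw [@norm_add_sq_real]
  have horth : (inner ℝ (gramSchmidt ℝ b k) (gramSchmidt ℝ b k') : ℝ) = 0 :=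
    gramSchmidt_orthogonal ℝ b hk'k.symm
  rw [real_inner_smul_right, horth, mul_zero, norm_smul]
  ring_nf
  rw [Real.norm_eq_abs, sq_abs]
  ring
end

section
/- Let n ≥ 2 and α ≥ 1 be real. Define w_1 = 3^n α − 2 and, for 2 ≤ k ≤ n−1, w_k = ( 3 (1 + √(k+3)) ∏_{j=2}^{k−1} (2 + √(j+3)) )^n α^k − 2. Then for every 1 ≤ m ≤ n−1, Σ_{i=1}^m w_i ≤ ( 3 ∏_{j=2}^{m} (2 + √(j+3)) )^n α^m − 2 (with the empty product equal to 1). -/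
lemma aux_pow_add_one (a : ℝ) (ha : 0 ≤ a) : ∀ n : ℕ, 1 ≤ n → a ^ n + 1 ≤ (a + 1) ^ n := by
  intro n hn
  induction n with
  | zero => omega
  | succ k ih =>
    rcases Nat.eq_or_lt_of_le hn with h | h
    · simp [← h]
    · have hk : 1 ≤ k := by omega
      have := ih hk
      have hak : 0 ≤ a ^ k := pow_nonneg ha k
      calc a ^ (k+1) + 1 ≤ (a ^ k + 1) * (a + 1) := by ring_nf; nlinarith
        _ ≤ (a + 1) ^ k * (a + 1) := by nlinarith
        _ = (a + 1) ^ (k+1) := by ring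

/-- Let `n ≥ 2` and `α ≥ 1` be real. Define `w 1 = 3^n * α − 2` and,
for `2 ≤ k ≤ n−1`,
`w k = (3 * (1 + √(k+3)) * ∏_{j ∈ [2, k−1]} (2 + √(j+3)))^n * α^k − 2`.
Then for every `1 ≤ m ≤ n−1`,
`∑_{i ∈ [1, m]} w i ≤ (3 * ∏_{j ∈ [2, m]} (2 + √(j+3)))^n * α^m − 2`
(empty products being `1`). -/
theorem stmt_15 (n : ℕ) (hn : 2 ≤ n) (α : ℝ) (hα : 1 ≤ α) (w : ℕ → ℝ)
    (hw1 : w 1 = 3 ^ n * α - 2)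
    (hwk : ∀ k : ℕ, 2 ≤ k → k ≤ n - 1 →
      w k = (3 * (1 + Real.sqrt ((k : ℝ) + 3)) *
          ∏ j ∈ Finset.Icc 2 (k - 1), (2 + Real.sqrt ((j : ℝ) + 3))) ^ n * α ^ k - 2) :
    ∀ m : ℕ, 1 ≤ m → m ≤ n - 1 →
      ∑ i ∈ Finset.Icc 1 m, w i ≤
        (3 * ∏ j ∈ Finset.Icc 2 m, (2 + Real.sqrt ((j : ℝ) + 3))) ^ n * α ^ m - 2 := by
  intro m hm
  induction m, hm using Nat.le_induction with
  | base =>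
    intro _
    simp [hw1, Finset.Icc_self]
  | succ m hm ih =>
    intro hmn
    have hmn' : m ≤ n - 1 := by omega
    have IH := ih hmn'
    set P := ∏ j ∈ Finset.Icc 2 m, (2 + Real.sqrt ((j : ℝ) + 3)) with hP
    have hP1 : (1:ℝ) ≤ P := by
      rw [hP]
      calc (1:ℝ) = ∏ _j ∈ Finset.Icc 2 m, (1:ℝ) := by simp
        _ ≤ ∏ j ∈ Finset.Icc 2 m, (2 + Real.sqrt ((j : ℝ) + 3)) :=
          Finset.prod_le_prod (fun j _ => zero_le_one)
            (fun j _ => by nlinarith [Real.sqrt_nonneg ((j : ℝ) + 3)])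
    have hsum : ∑ i ∈ Finset.Icc 1 (m+1), w i = (∑ i ∈ Finset.Icc 1 m, w i) + w (m+1) :=
      Finset.sum_Icc_succ_top (by omega) w
    have hprod : ∏ j ∈ Finset.Icc 2 (m+1), (2 + Real.sqrt ((j : ℝ) + 3))
        = P * (2 + Real.sqrt ((m:ℝ) + 1 + 3)) := by
      have hc : ((m + 1 : ℕ) : ℝ) + 3 = (m : ℝ) + 1 + 3 := by push_cast; ring
      rw [hP, Finset.prod_Icc_succ_top (by omega : 2 ≤ m + 1), hc]
    have hwm1 := hwk (m+1) (by omega) hmn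
    simp only [Nat.add_sub_cancel] at hwm1
    set s := Real.sqrt ((m:ℝ) + 1 + 3) with hs
    have hs0 : 0 ≤ s := Real.sqrt_nonneg _
    have hcast : ((m+1 : ℕ) : ℝ) + 3 = (m:ℝ) + 1 + 3 := by push_cast; ring
    rw [hsum, hprod, hwm1, hcast]
    -- key inequality
    have hkey : (1 + s) ^ n + 1 ≤ (2 + s) ^ n :=
      calc (1 + s) ^ n + 1 ≤ ((1 + s) + 1) ^ n :=
            aux_pow_add_one (1 + s) (by linarith) n (by omega)
        _ = (2 + s) ^ n := by ring_nf
    have hαm : α ^ m ≤ α ^ (m+1) := pow_le_pow_right₀ hα (by omega)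
    have hαm1 : (1:ℝ) ≤ α ^ (m+1) := one_le_pow₀ hα
    have h3P : (0:ℝ) < 3 * P := by linarith
    have h3Pn : (0:ℝ) < (3 * P) ^ n := pow_pos h3P n
    have e1 : (3 * (1 + s) * P) ^ n = (3 * P) ^ n * (1 + s) ^ n := by
      rw [← mul_pow]; ring_nf
    have e2 : (3 * (P * (2 + s))) ^ n = (3 * P) ^ n * (2 + s) ^ n := by
      rw [← mul_pow]; ring_nf
    have step1 : (3 * P) ^ n * α ^ m ≤ (3 * P) ^ n * α ^ (m+1) := by
      exact mul_le_mul_of_nonneg_left hαm (le_of_lt h3Pn)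
    calc (∑ i ∈ Finset.Icc 1 m, w i) + ((3 * (1 + s) * P) ^ n * α ^ (m+1) - 2)
        ≤ ((3 * P) ^ n * α ^ m - 2) + ((3 * (1 + s) * P) ^ n * α ^ (m+1) - 2) := by
          linarith [IH]
      _ ≤ ((3 * P) ^ n * α ^ (m+1)) + ((3 * P) ^ n * (1 + s) ^ n * α ^ (m+1)) - 4 := by
          rw [e1]; linarith
      _ = (3 * P) ^ n * ((1 + s) ^ n + 1) * α ^ (m+1) - 4 := by ring
      _ ≤ (3 * P) ^ n * (2 + s) ^ n * α ^ (m+1) - 4 := by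
          have : (3 * P) ^ n * ((1 + s) ^ n + 1) ≤ (3 * P) ^ n * (2 + s) ^ n :=
            mul_le_mul_of_nonneg_left hkey (le_of_lt h3Pn)
          nlinarith
      _ ≤ (3 * (P * (2 + s))) ^ n * α ^ (m+1) - 2 := by rw [e2]; linarith
end

section
/- Let B be the 3×3 integer matrix with columns b_1 = (0, 3, −2), b_2 = (−3, −2, 0), b_3 = (2, −2, −2), and let σ_{1,3}(B) be the basis (b_3, b_1, b_2). Then Pot(B) = 2,496,676 and Pot(σ_{1,3}(B)) = 2,633,856; in particular Pot(σ_{1,3}(B)) > Pot(B), so Pot is not monotonically decreasing under the deep insertion performed by 1-DeepLLL on this input. -/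
/-- The potential `Pot(B) = ∏_{i=1}^{3} B_i^{3−i+1} = B₁³ B₂² B₃` of a triple of vectors
in `ℝ³`, where `B_i = ‖bᵢ*‖²` are the squared norms of the Gram–Schmidt vectors
(`0`-indexed exponent `3 − i`). -/
noncomputable def Pot3 (f : Fin 3 → EuclideanSpace ℝ (Fin 3)) : ℝ :=
  ∏ i : Fin 3, (‖InnerProductSpace.gramSchmidt ℝ f i‖ ^ 2) ^ (3 - (i : ℕ))

open InnerProductSpace

section helpers

variable {E : Type*} [NormedAddCommGroup E] [InnerProductSpace ℝ E]

lemma gs0' (f : Fin 3 → E) : gramSchmidt ℝ f 0 = f 0 := gramSchmidt_bot ℝ f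

lemma gs1' (f : Fin 3 → E) :
    gramSchmidt ℝ f 1 = f 1 - (inner ℝ (f 0) (f 1) / (‖f 0‖:ℝ) ^ 2) • f 0 := by
  rw [gramSchmidt_def]
  have : (Finset.Iio (1 : Fin 3)) = {0} := by decide
  rw [this, Finset.sum_singleton, Submodule.starProjection_singleton, gs0']
  norm_num

lemma gs2' (f : Fin 3 → E) :
    gramSchmidt ℝ f 2 = f 2 - (inner ℝ (f 0) (f 2) / (‖f 0‖:ℝ) ^ 2) • f 0
      - (inner ℝ (gramSchmidt ℝ f 1) (f 2) / (‖gramSchmidt ℝ f 1‖:ℝ) ^ 2) • gramSchmidt ℝ f 1 := by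
  rw [gramSchmidt_def]
  have : (Finset.Iio (2 : Fin 3)) = {0, 1} := by decide
  rw [this, Finset.sum_insert (by decide), Finset.sum_singleton,
    Submodule.starProjection_singleton, Submodule.starProjection_singleton, gs0']
  push_cast
  abel

noncomputable abbrev ev (x y z : ℝ) : EuclideanSpace ℝ (Fin 3) :=
  (WithLp.equiv 2 (Fin 3 → ℝ)).symm ![x, y, z]

lemma inner_ev (x y z x' y' z' : ℝ) :
    (inner ℝ (ev x y z) (ev x' y' z') : ℝ) = x*x' + y*y' + z*z' := by
  simp [PiLp.inner_apply, Fin.sum_univ_three, WithLp.equiv_symm_apply]; ring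

lemma norm_sq_ev (x y z : ℝ) : (‖ev x y z‖:ℝ) ^ 2 = x^2 + y^2 + z^2 := by
  rw [← real_inner_self_eq_norm_sq, inner_ev]; ring

lemma sub_smul_ev (x y z x' y' z' c : ℝ) :
    ev x y z - c • ev x' y' z' = ev (x - c*x') (y - c*y') (z - c*z') := by
  ext i
  fin_cases i <;> simp [WithLp.equiv_symm_apply]

lemma ev_congr {x y z x' y' z' : ℝ} (hx : x = x') (hy : y = y') (hz : z = z') :
    ev x y z = ev x' y' z' := by rw [hx, hy, hz]

lemma pot3_eval (f : Fin 3 → EuclideanSpace ℝ (Fin 3)) :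
    Pot3 f = (‖gramSchmidt ℝ f 0‖ ^ 2) ^ 3 * (‖gramSchmidt ℝ f 1‖ ^ 2) ^ 2
      * (‖gramSchmidt ℝ f 2‖ ^ 2) ^ 1 := by
  rw [Pot3, Fin.prod_univ_three]
  norm_num

end helpers

/-- Let `b` have columns `b₁ = (0, 3, −2)`, `b₂ = (−3, −2, 0)`,
`b₃ = (2, −2, −2)`, and let `σ_{1,3}(b) = (b₃, b₁, b₂)`. Then `Pot(b) = 2496676` and
`Pot(σ_{1,3}(b)) = 2633856`; in particular `Pot(σ_{1,3}(b)) > Pot(b)`, so `Pot` is not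
monotonically decreasing under the deep insertion performed by `1`-DeepLLL on this
input. -/
theorem stmt_18 (b : Fin 3 → EuclideanSpace ℝ (Fin 3))
    (hb0 : b 0 = (WithLp.equiv 2 (Fin 3 → ℝ)).symm ![0, 3, -2])
    (hb1 : b 1 = (WithLp.equiv 2 (Fin 3 → ℝ)).symm ![-3, -2, 0])
    (hb2 : b 2 = (WithLp.equiv 2 (Fin 3 → ℝ)).symm ![2, -2, -2]) :
    Pot3 b = 2496676 ∧ Pot3 ![b 2, b 0, b 1] = 2633856 ∧ Pot3 b < Pot3 ![b 2, b 0, b 1] := by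
  replace hb0 : b 0 = ev 0 3 (-2) := hb0
  replace hb1 : b 1 = ev (-3) (-2) 0 := hb1
  replace hb2 : b 2 = ev 2 (-2) (-2) := hb2
  -- Gram–Schmidt for b
  have hg1 : gramSchmidt ℝ b 1 = ev (-3) (-8/13) (-12/13) := by
    rw [gs1', hb0, hb1, inner_ev, norm_sq_ev, sub_smul_ev]
    exact ev_congr (by norm_num) (by norm_num) (by norm_num)
  have hg2 : gramSchmidt ℝ b 2 = ev (8/7) (-12/7) (-18/7) := by
    rw [gs2', hb0, hb2, hg1, inner_ev, inner_ev, norm_sq_ev, norm_sq_ev,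
      sub_smul_ev, sub_smul_ev]
    exact ev_congr (by norm_num) (by norm_num) (by norm_num)
  have hP : Pot3 b = 2496676 := by
    rw [pot3_eval, gs0', hb0, hg1, hg2, norm_sq_ev, norm_sq_ev, norm_sq_ev]
    norm_num
  -- Gram–Schmidt for the permuted basis
  set c : Fin 3 → EuclideanSpace ℝ (Fin 3) := ![b 2, b 0, b 1] with hc
  have hc0 : c 0 = ev 2 (-2) (-2) := by rw [hc]; simpa using hb2
  have hc1 : c 1 = ev 0 3 (-2) := by rw [hc]; simpa using hb0
  have hc2 : c 2 = ev (-3) (-2) 0 := by rw [hc]; simpa using hb1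
  have hg1' : gramSchmidt ℝ c 1 = ev (1/3) (8/3) (-7/3) := by
    rw [gs1', hc0, hc1, inner_ev, norm_sq_ev, sub_smul_ev]
    exact ev_congr (by norm_num) (by norm_num) (by norm_num)
  have hg2' : gramSchmidt ℝ c 2 = ev (-5/2) (-1) (-3/2) := by
    rw [gs2', hc0, hc2, hg1', inner_ev, inner_ev, norm_sq_ev, norm_sq_ev,
      sub_smul_ev, sub_smul_ev]
    exact ev_congr (by norm_num) (by norm_num) (by norm_num)
  have hP' : Pot3 c = 2633856 := by
    rw [pot3_eval, gs0', hc0, hg1', hg2', norm_sq_ev, norm_sq_ev, norm_sq_ev]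
    norm_num
  exact ⟨hP, hP', by rw [hP, hP']; norm_num⟩
end

section
/- Let B be the 3×3 integer matrix with columns b_1 = (3, 1, −1), b_2 = (1, −1, 2), b_3 = (1, −2, −2), and let σ_{1,3}(B) = (b_3, b_1, b_2) and σ_{2,3}(B) = (b_1, b_3, b_2). Then SS(σ_{1,3}(B)) = 2239/90, SS(σ_{2,3}(B)) = 24809/990, SS(B) − SS(σ_{1,3}(B)) = 68/495 > 0, and Pot(σ_{1,3}(B)) = 428,490 > 384,054 = Pot(B); hence Pot is not monotonically decreasing under the insertion performed by 1-S²LLL on this input. -/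
/-- The squared-sum `SS(B) = B₁ + B₂ + B₃` of a triple of vectors in `ℝ³`, where
`B_i = ‖bᵢ*‖²`. -/
noncomputable def SS3 (f : Fin 3 → EuclideanSpace ℝ (Fin 3)) : ℝ :=
  ∑ i : Fin 3, ‖InnerProductSpace.gramSchmidt ℝ f i‖ ^ 2

open InnerProductSpace

open RealInnerProductSpace in
lemma gs3_0 (f : Fin 3 → EuclideanSpace ℝ (Fin 3)) : gramSchmidt ℝ f 0 = f 0 := by
  have : (0 : Fin 3) = ⊥ := rfl
  rw [this, gramSchmidt_bot]

open RealInnerProductSpace in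
lemma gs3_1 (f : Fin 3 → EuclideanSpace ℝ (Fin 3)) :
    gramSchmidt ℝ f 1 = f 1 - (⟪f 0, f 1⟫ / ‖f 0‖ ^ 2) • f 0 := by
  have h := gramSchmidt_def'' ℝ f 1
  have hio : Finset.Iio (1 : Fin 3) = {0} := by decide
  rw [hio, Finset.sum_singleton, gs3_0] at h
  exact eq_sub_of_add_eq h.symm

open RealInnerProductSpace in
lemma gs3_2 (f : Fin 3 → EuclideanSpace ℝ (Fin 3)) :
    gramSchmidt ℝ f 2 = f 2
      - (⟪gramSchmidt ℝ f 0, f 2⟫ / ‖gramSchmidt ℝ f 0‖ ^ 2) • gramSchmidt ℝ f 0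
      - (⟪gramSchmidt ℝ f 1, f 2⟫ / ‖gramSchmidt ℝ f 1‖ ^ 2) • gramSchmidt ℝ f 1 := by
  have h := gramSchmidt_def'' ℝ f 2
  have hio : Finset.Iio (2 : Fin 3) = {0, 1} := by decide
  rw [hio, Finset.sum_insert (by decide), Finset.sum_singleton] at h
  rw [sub_sub]
  exact eq_sub_of_add_eq h.symm

/-- Let `b` have columns `b₁ = (3, 1, −1)`, `b₂ = (1, −1, 2)`,
`b₃ = (1, −2, −2)`, and let `σ_{1,3}(b) = (b₃, b₁, b₂)` and `σ_{2,3}(b) = (b₁, b₃, b₂)`.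
Then `SS(σ_{1,3}(b)) = 2239/90`, `SS(σ_{2,3}(b)) = 24809/990`,
`SS(b) − SS(σ_{1,3}(b)) = 68/495 > 0`, and
`Pot(σ_{1,3}(b)) = 428490 > 384054 = Pot(b)`; hence `Pot` is not monotonically
decreasing under the insertion performed by `1`-`S²`LLL on this input. -/
theorem stmt_19 (b : Fin 3 → EuclideanSpace ℝ (Fin 3))
    (hb0 : b 0 = (WithLp.equiv 2 (Fin 3 → ℝ)).symm ![3, 1, -1])
    (hb1 : b 1 = (WithLp.equiv 2 (Fin 3 → ℝ)).symm ![1, -1, 2])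
    (hb2 : b 2 = (WithLp.equiv 2 (Fin 3 → ℝ)).symm ![1, -2, -2]) :
    SS3 ![b 2, b 0, b 1] = 2239 / 90 ∧
      SS3 ![b 0, b 2, b 1] = 24809 / 990 ∧
      SS3 b - SS3 ![b 2, b 0, b 1] = 68 / 495 ∧
      0 < SS3 b - SS3 ![b 2, b 0, b 1] ∧
      Pot3 ![b 2, b 0, b 1] = 428490 ∧
      Pot3 b = 384054 ∧
      Pot3 b < Pot3 ![b 2, b 0, b 1] := by
  have hc0 : (![b 2, b 0, b 1] : Fin 3 → EuclideanSpace ℝ (Fin 3)) 0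
      = (WithLp.equiv 2 (Fin 3 → ℝ)).symm ![1, -2, -2] := hb2
  have hc1 : (![b 2, b 0, b 1] : Fin 3 → EuclideanSpace ℝ (Fin 3)) 1
      = (WithLp.equiv 2 (Fin 3 → ℝ)).symm ![3, 1, -1] := hb0
  have hc2 : (![b 2, b 0, b 1] : Fin 3 → EuclideanSpace ℝ (Fin 3)) 2
      = (WithLp.equiv 2 (Fin 3 → ℝ)).symm ![1, -1, 2] := hb1
  have hd0 : (![b 0, b 2, b 1] : Fin 3 → EuclideanSpace ℝ (Fin 3)) 0
      = (WithLp.equiv 2 (Fin 3 → ℝ)).symm ![3, 1, -1] := hb0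
  have hd1 : (![b 0, b 2, b 1] : Fin 3 → EuclideanSpace ℝ (Fin 3)) 1
      = (WithLp.equiv 2 (Fin 3 → ℝ)).symm ![1, -2, -2] := hb2
  have hd2 : (![b 0, b 2, b 1] : Fin 3 → EuclideanSpace ℝ (Fin 3)) 2
      = (WithLp.equiv 2 (Fin 3 → ℝ)).symm ![1, -1, 2] := hb1
  have nb0 : ‖gramSchmidt ℝ (b) 0‖ ^ 2 = 11 := by
    rw [← real_inner_self_eq_norm_sq, gs3_0 (b), hb0]
    simp only [← real_inner_self_eq_norm_sq, PiLp.inner_apply, RCLike.inner_apply, conj_trivial,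
      Fin.sum_univ_three, WithLp.equiv_symm_apply, PiLp.toLp_apply, Matrix.cons_val, PiLp.sub_apply, PiLp.smul_apply, smul_eq_mul,
      Matrix.cons_val_zero, Matrix.cons_val_one, Matrix.head_cons, Matrix.cons_val_two,
      Matrix.tail_cons]
    norm_num
  have nb1 : ‖gramSchmidt ℝ (b) 1‖ ^ 2 = 6 := by
    rw [← real_inner_self_eq_norm_sq, gs3_1 (b), hb0, hb1]
    simp only [← real_inner_self_eq_norm_sq, PiLp.inner_apply, RCLike.inner_apply, conj_trivial,
      Fin.sum_univ_three, WithLp.equiv_symm_apply, PiLp.toLp_apply, Matrix.cons_val, PiLp.sub_apply, PiLp.smul_apply, smul_eq_mul,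
      Matrix.cons_val_zero, Matrix.cons_val_one, Matrix.head_cons, Matrix.cons_val_two,
      Matrix.tail_cons]
    norm_num
  have nb2 : ‖gramSchmidt ℝ (b) 2‖ ^ 2 = 529 / 66 := by
    rw [← real_inner_self_eq_norm_sq, gs3_2 (b), gs3_1 (b), gs3_0 (b), hb0, hb1, hb2]
    simp only [← real_inner_self_eq_norm_sq, PiLp.inner_apply, RCLike.inner_apply, conj_trivial,
      Fin.sum_univ_three, WithLp.equiv_symm_apply, PiLp.toLp_apply, Matrix.cons_val, PiLp.sub_apply, PiLp.smul_apply, smul_eq_mul,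
      Matrix.cons_val_zero, Matrix.cons_val_one, Matrix.head_cons, Matrix.cons_val_two,
      Matrix.tail_cons]
    norm_num

  have nc0 : ‖gramSchmidt ℝ (![b 2, b 0, b 1]) 0‖ ^ 2 = 9 := by
    rw [← real_inner_self_eq_norm_sq, gs3_0 (![b 2, b 0, b 1]), hc0]
    simp only [← real_inner_self_eq_norm_sq, PiLp.inner_apply, RCLike.inner_apply, conj_trivial,
      Fin.sum_univ_three, WithLp.equiv_symm_apply, PiLp.toLp_apply, Matrix.cons_val, PiLp.sub_apply, PiLp.smul_apply, smul_eq_mul,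
      Matrix.cons_val_zero, Matrix.cons_val_one, Matrix.head_cons, Matrix.cons_val_two,
      Matrix.tail_cons]
    norm_num
  have nc1 : ‖gramSchmidt ℝ (![b 2, b 0, b 1]) 1‖ ^ 2 = 10 := by
    rw [← real_inner_self_eq_norm_sq, gs3_1 (![b 2, b 0, b 1]), hc0, hc1]
    simp only [← real_inner_self_eq_norm_sq, PiLp.inner_apply, RCLike.inner_apply, conj_trivial,
      Fin.sum_univ_three, WithLp.equiv_symm_apply, PiLp.toLp_apply, Matrix.cons_val, PiLp.sub_apply, PiLp.smul_apply, smul_eq_mul,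
      Matrix.cons_val_zero, Matrix.cons_val_one, Matrix.head_cons, Matrix.cons_val_two,
      Matrix.tail_cons]
    norm_num
  have nc2 : ‖gramSchmidt ℝ (![b 2, b 0, b 1]) 2‖ ^ 2 = 529 / 90 := by
    rw [← real_inner_self_eq_norm_sq, gs3_2 (![b 2, b 0, b 1]), gs3_1 (![b 2, b 0, b 1]), gs3_0 (![b 2, b 0, b 1]), hc0, hc1, hc2]
    simp only [← real_inner_self_eq_norm_sq, PiLp.inner_apply, RCLike.inner_apply, conj_trivial,
      Fin.sum_univ_three, WithLp.equiv_symm_apply, PiLp.toLp_apply, Matrix.cons_val, PiLp.sub_apply, PiLp.smul_apply, smul_eq_mul,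
      Matrix.cons_val_zero, Matrix.cons_val_one, Matrix.head_cons, Matrix.cons_val_two,
      Matrix.tail_cons]
    norm_num

  have nd0 : ‖gramSchmidt ℝ (![b 0, b 2, b 1]) 0‖ ^ 2 = 11 := by
    rw [← real_inner_self_eq_norm_sq, gs3_0 (![b 0, b 2, b 1]), hd0]
    simp only [← real_inner_self_eq_norm_sq, PiLp.inner_apply, RCLike.inner_apply, conj_trivial,
      Fin.sum_univ_three, WithLp.equiv_symm_apply, PiLp.toLp_apply, Matrix.cons_val, PiLp.sub_apply, PiLp.smul_apply, smul_eq_mul,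
      Matrix.cons_val_zero, Matrix.cons_val_one, Matrix.head_cons, Matrix.cons_val_two,
      Matrix.tail_cons]
    norm_num
  have nd1 : ‖gramSchmidt ℝ (![b 0, b 2, b 1]) 1‖ ^ 2 = 90 / 11 := by
    rw [← real_inner_self_eq_norm_sq, gs3_1 (![b 0, b 2, b 1]), hd0, hd1]
    simp only [← real_inner_self_eq_norm_sq, PiLp.inner_apply, RCLike.inner_apply, conj_trivial,
      Fin.sum_univ_three, WithLp.equiv_symm_apply, PiLp.toLp_apply, Matrix.cons_val, PiLp.sub_apply, PiLp.smul_apply, smul_eq_mul,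
      Matrix.cons_val_zero, Matrix.cons_val_one, Matrix.head_cons, Matrix.cons_val_two,
      Matrix.tail_cons]
    norm_num
  have nd2 : ‖gramSchmidt ℝ (![b 0, b 2, b 1]) 2‖ ^ 2 = 529 / 90 := by
    rw [← real_inner_self_eq_norm_sq, gs3_2 (![b 0, b 2, b 1]), gs3_1 (![b 0, b 2, b 1]), gs3_0 (![b 0, b 2, b 1]), hd0, hd1, hd2]
    simp only [← real_inner_self_eq_norm_sq, PiLp.inner_apply, RCLike.inner_apply, conj_trivial,
      Fin.sum_univ_three, WithLp.equiv_symm_apply, PiLp.toLp_apply, Matrix.cons_val, PiLp.sub_apply, PiLp.smul_apply, smul_eq_mul,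
      Matrix.cons_val_zero, Matrix.cons_val_one, Matrix.head_cons, Matrix.cons_val_two,
      Matrix.tail_cons]
    norm_num

  simp only [SS3, Pot3, Fin.sum_univ_three, Fin.prod_univ_three, nb0, nb1, nb2, nc0, nc1, nc2,
    nd0, nd1, nd2]
  norm_num
end
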